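/- Let K random variables X_1,...,X_K and Z be such that the joint distribution of (X_1,...,X_K,Z) is invariant under permutations of the indices 1,...,K. Then for any nested subsets A ⊆ B ⊆ {1,...,K}, (1/|A|)·H(X_A | Z) ≥ (1/|B|)·H(X_B | Z). -/

import Mathlib

open Finset
open scoped Classical BigOperators

noncomputable def distOf {Ω α : Type*} [Fintype Ω] (μ : Ω → ℝ) (X : Ω → α) (a : α) : ℝ :=
  ∑ ω, if X ω = a then μ ω else 0

noncomputable def ent {Ω α : Type*} [Fintype Ω] [Fintype α] (μ : Ω → ℝ) (X : Ω → α) : ℝ :=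
  ∑ a, Real.negMulLog (distOf μ X a)

noncomputable def condEnt {Ω α γ : Type*} [Fintype Ω] [Fintype α] [Fintype γ]
    (μ : Ω → ℝ) (X : Ω → α) (Z : Ω → γ) : ℝ :=
  ent μ (fun ω => (X ω, Z ω)) - ent μ Z

def restr {Ω ι α : Type*} (X : ι → Ω → α) (A : Finset ι) : Ω → (A → α) :=
  fun ω i => X i ω

section Lemmas

variable {Ω : Type*} [Fintype Ω] (μ : Ω → ℝ)

lemma distOf_nonneg (hμ0 : ∀ ω, 0 ≤ μ ω) {α : Type*} (X : Ω → α) (a : α) :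
    0 ≤ distOf μ X a := by
  refine Finset.sum_nonneg fun ω _ => ?_
  split
  · exact hμ0 ω
  · exact le_refl 0

lemma sum_distOf {α : Type*} [Fintype α] (X : Ω → α) :
    ∑ a, distOf μ X a = ∑ ω, μ ω := by
  unfold distOf
  rw [Finset.sum_comm]
  refine Finset.sum_congr rfl fun ω _ => ?_
  rw [Finset.sum_ite_eq univ (X ω) (fun _ => μ ω)]
  simp

lemma distOf_comp {α β : Type*} [Fintype α] (X : Ω → α) (f : α → β) (c : β) :
    distOf μ (fun ω => f (X ω)) c = ∑ a, if f a = c then distOf μ X a else 0 := by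
  unfold distOf
  have : ∀ a : α, (if f a = c then ∑ ω, if X ω = a then μ ω else 0 else 0)
      = ∑ ω, if X ω = a then (if f a = c then μ ω else 0) else 0 := by
    intro a
    by_cases h : f a = c <;> simp [h]
  simp only [this]
  rw [Finset.sum_comm]
  refine Finset.sum_congr rfl fun ω _ => ?_
  rw [Finset.sum_ite_eq univ (X ω) (fun a => if f a = c then μ ω else 0)]
  simp

lemma ent_congr {α : Type*} [Fintype α] (X Y : Ω → α)
    (h : ∀ a, distOf μ X a = distOf μ Y a) : ent μ X = ent μ Y := by
  unfold ent; exact Finset.sum_congr rfl fun a _ => by rw [h a]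

lemma distOf_comp_inj {α β : Type*} (X : Ω → α) (e : α → β)
    (he : Function.Injective e) (a : α) :
    distOf μ (fun ω => e (X ω)) (e a) = distOf μ X a := by
  unfold distOf
  exact Finset.sum_congr rfl fun ω _ => by simp [he.eq_iff]

lemma distOf_comp_notMem {α β : Type*} (X : Ω → α) (e : α → β)
    {b : β} (hb : ∀ a, e a ≠ b) :
    distOf μ (fun ω => e (X ω)) b = 0 := by
  unfold distOf
  exact Finset.sum_eq_zero fun ω _ => by simp [hb (X ω)]

lemma ent_comp_inj {α β : Type*} [Fintype α] [Fintype β] (X : Ω → α) (e : α → β)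
    (he : Function.Injective e) :
    ent μ (fun ω => e (X ω)) = ent μ X := by
  unfold ent
  rw [← Finset.sum_subset (Finset.subset_univ (univ.image e))
    (fun b _ hb => by
      have : ∀ a, e a ≠ b := fun a h => hb (Finset.mem_image.2 ⟨a, Finset.mem_univ a, h⟩)
      rw [distOf_comp_notMem μ X e this, Real.negMulLog_zero])]
  rw [Finset.sum_image (fun a _ a' _ h => he h)]
  exact Finset.sum_congr rfl fun a _ => by rw [distOf_comp_inj μ X e he a]



end Lemmas

section Submod
variable {Ω : Type*} [Fintype Ω] (μ : Ω → ℝ)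

lemma marg_v {α₁ α₂ α₃ : Type*} [Fintype α₂]
    (U : Ω → α₁) (V : Ω → α₂) (W : Ω → α₃) (u : α₁) (w : α₃) :
    distOf μ (fun ω => (U ω, W ω)) (u, w)
      = ∑ v, distOf μ (fun ω => (U ω, V ω, W ω)) (u, v, w) := by
  unfold distOf
  rw [Finset.sum_comm]
  refine Finset.sum_congr rfl fun ω _ => ?_
  by_cases hU : U ω = u <;> by_cases hW : W ω = w <;>
    simp [Prod.ext_iff, hU, hW, Finset.sum_ite_eq univ (V ω) (fun _ => μ ω)]

lemma marg_u {α₁ α₂ α₃ : Type*} [Fintype α₁]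
    (U : Ω → α₁) (V : Ω → α₂) (W : Ω → α₃) (v : α₂) (w : α₃) :
    distOf μ (fun ω => (V ω, W ω)) (v, w)
      = ∑ u, distOf μ (fun ω => (U ω, V ω, W ω)) (u, v, w) := by
  unfold distOf
  rw [Finset.sum_comm]
  refine Finset.sum_congr rfl fun ω _ => ?_
  by_cases hV : V ω = v <;> by_cases hW : W ω = w <;>
    simp [Prod.ext_iff, hV, hW, Finset.sum_ite_eq univ (U ω) (fun _ => μ ω)]

lemma marg_w {α₁ α₃ : Type*} [Fintype α₁]
    (U : Ω → α₁) (W : Ω → α₃) (w : α₃) :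
    distOf μ W w = ∑ u, distOf μ (fun ω => (U ω, W ω)) (u, w) := by
  unfold distOf
  rw [Finset.sum_comm]
  refine Finset.sum_congr rfl fun ω _ => ?_
  by_cases hW : W ω = w <;>
    simp [Prod.ext_iff, hW, Finset.sum_ite_eq univ (U ω) (fun _ => μ ω)]

lemma negMulLog_sum_eq {ι : Type*} (s : Finset ι) (f : ι → ℝ) :
    Real.negMulLog (∑ i ∈ s, f i) = ∑ i ∈ s, -(f i * Real.log (∑ j ∈ s, f j)) := by
  rw [Real.negMulLog, neg_mul, Finset.sum_mul, ← Finset.sum_neg_distrib]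

lemma ent_submod {α₁ α₂ α₃ : Type*} [Fintype α₁] [Fintype α₂] [Fintype α₃]
    (hμ0 : ∀ ω, 0 ≤ μ ω) (hμ1 : ∑ ω, μ ω = 1)
    (U : Ω → α₁) (V : Ω → α₂) (W : Ω → α₃) :
    ent μ (fun ω => (U ω, V ω, W ω)) + ent μ W
      ≤ ent μ (fun ω => (U ω, W ω)) + ent μ (fun ω => (V ω, W ω)) := by
  let p : α₁ → α₂ → α₃ → ℝ := fun u v w => distOf μ (fun ω => (U ω, V ω, W ω)) (u, v, w)
  let q : α₁ → α₃ → ℝ := fun u w => distOf μ (fun ω => (U ω, W ω)) (u, w)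
  let r : α₂ → α₃ → ℝ := fun v w => distOf μ (fun ω => (V ω, W ω)) (v, w)
  let s : α₃ → ℝ := fun w => distOf μ W w
  have hpn : ∀ u v w, 0 ≤ p u v w := fun u v w => distOf_nonneg μ hμ0 _ _
  have hqn : ∀ u w, 0 ≤ q u w := fun u w => distOf_nonneg μ hμ0 _ _
  have hrn : ∀ v w, 0 ≤ r v w := fun v w => distOf_nonneg μ hμ0 _ _
  have hsn : ∀ w, 0 ≤ s w := fun w => distOf_nonneg μ hμ0 _ _
  have hqm : ∀ u w, q u w = ∑ v, p u v w := fun u w => marg_v μ U V W u w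
  have hrm : ∀ v w, r v w = ∑ u, p u v w := fun v w => marg_u μ U V W v w
  have hsq : ∀ w, ∑ u, q u w = s w := fun w => (marg_w μ U W w).symm
  have hsr : ∀ w, ∑ v, r v w = s w := fun w => (marg_w μ V W w).symm
  have hsm : ∀ w, s w = ∑ u, ∑ v, p u v w := fun w => by
    rw [← hsq w]; exact Finset.sum_congr rfl fun u _ => hqm u w
  have hpq : ∀ u v w, p u v w ≤ q u w := fun u v w => by
    rw [hqm]; exact Finset.single_le_sum (fun v _ => hpn u v w) (mem_univ v)
  have hpr : ∀ u v w, p u v w ≤ r v w := fun u v w => by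
    rw [hrm]; exact Finset.single_le_sum (fun u _ => hpn u v w) (mem_univ u)
  have hps : ∀ u v w, p u v w ≤ s w := fun u v w => by
    rw [hsm]
    calc p u v w ≤ ∑ v, p u v w :=
          Finset.single_le_sum (fun v _ => hpn u v w) (mem_univ v)
      _ ≤ ∑ u, ∑ v, p u v w :=
          Finset.single_le_sum (fun u _ => Finset.sum_nonneg fun v _ => hpn u v w) (mem_univ u)
  have hsum_p : ∑ u, ∑ v, ∑ w, p u v w = 1 := by
    have h := sum_distOf μ (fun ω => (U ω, V ω, W ω))
    rw [hμ1] at h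
    rw [← h, Fintype.sum_prod_type]
    refine Finset.sum_congr rfl fun u _ => ?_
    rw [Fintype.sum_prod_type]
  have hsum_s : ∑ w, s w = 1 := by
    have h := sum_distOf μ W; rw [hμ1] at h; exact h
  have e_triple : ent μ (fun ω => (U ω, V ω, W ω))
      = ∑ u, ∑ v, ∑ w, Real.negMulLog (p u v w) := by
    unfold ent
    rw [Fintype.sum_prod_type]
    exact Finset.sum_congr rfl fun u _ => by rw [Fintype.sum_prod_type]
  have e_q : ent μ (fun ω => (U ω, W ω))
      = ∑ u, ∑ v, ∑ w, (-(p u v w * Real.log (q u w))) := by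
    unfold ent
    rw [Fintype.sum_prod_type]
    refine Finset.sum_congr rfl fun u _ => ?_
    rw [Finset.sum_comm]
    refine Finset.sum_congr rfl fun w _ => ?_
    have : q u w = ∑ v, p u v w := hqm u w
    calc Real.negMulLog (distOf μ (fun ω => (U ω, W ω)) (u, w))
        = Real.negMulLog (∑ v, p u v w) := by rw [← this]
      _ = ∑ v, -(p u v w * Real.log (∑ v', p u v' w)) := negMulLog_sum_eq univ _
      _ = ∑ v, -(p u v w * Real.log (q u w)) := by
          exact Finset.sum_congr rfl fun v _ => by rw [← this]
  have e_r : ent μ (fun ω => (V ω, W ω))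
      = ∑ u, ∑ v, ∑ w, (-(p u v w * Real.log (r v w))) := by
    unfold ent
    rw [Fintype.sum_prod_type]
    have swap : ∀ g : α₁ → α₂ → α₃ → ℝ,
        (∑ u, ∑ v, ∑ w, g u v w) = ∑ v, ∑ u, ∑ w, g u v w := fun g => Finset.sum_comm
    rw [swap]
    refine Finset.sum_congr rfl fun v _ => ?_
    rw [Finset.sum_comm]
    refine Finset.sum_congr rfl fun w _ => ?_
    have : r v w = ∑ u, p u v w := hrm v w
    calc Real.negMulLog (distOf μ (fun ω => (V ω, W ω)) (v, w))
        = Real.negMulLog (∑ u, p u v w) := by rw [← this]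
      _ = ∑ u, -(p u v w * Real.log (∑ u', p u' v w)) := negMulLog_sum_eq univ _
      _ = ∑ u, -(p u v w * Real.log (r v w)) := by
          exact Finset.sum_congr rfl fun u _ => by rw [← this]
  have e_s : ent μ W = ∑ u, ∑ v, ∑ w, (-(p u v w * Real.log (s w))) := by
    unfold ent
    have swap : ∀ g : α₁ → α₂ → α₃ → ℝ,
        (∑ u, ∑ v, ∑ w, g u v w) = ∑ w, ∑ u, ∑ v, g u v w := by
      intro g
      calc (∑ u, ∑ v, ∑ w, g u v w) = ∑ u, ∑ w, ∑ v, g u v w :=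
            Finset.sum_congr rfl fun u _ => Finset.sum_comm
        _ = ∑ w, ∑ u, ∑ v, g u v w := Finset.sum_comm
    rw [swap]
    refine Finset.sum_congr rfl fun w _ => ?_
    have h := negMulLog_sum_eq (univ : Finset (α₁ × α₂)) (fun uv : α₁ × α₂ => p uv.1 uv.2 w)
    simp only [Fintype.sum_prod_type] at h
    rw [← hsm w] at h
    exact h
  have key : ∀ u v w,
      Real.negMulLog (p u v w) + (-(p u v w * Real.log (s w)))
        - (-(p u v w * Real.log (q u w))) - (-(p u v w * Real.log (r v w)))
      ≤ (if s w = 0 then 0 else q u w * r v w / s w) - p u v w := by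
    intro u v w
    by_cases hp0 : p u v w = 0
    · have hL : Real.negMulLog (p u v w) + (-(p u v w * Real.log (s w)))
          - (-(p u v w * Real.log (q u w))) - (-(p u v w * Real.log (r v w))) = 0 := by
        rw [hp0]; simp
      rw [hL, hp0, sub_zero]
      split
      · exact le_rfl
      · exact div_nonneg (mul_nonneg (hqn u w) (hrn v w)) (hsn w)
    · have hppos : 0 < p u v w := lt_of_le_of_ne (hpn u v w) (Ne.symm hp0)
      have hqpos : 0 < q u w := lt_of_lt_of_le hppos (hpq u v w)
      have hrpos : 0 < r v w := lt_of_lt_of_le hppos (hpr u v w)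
      have hspos : 0 < s w := lt_of_lt_of_le hppos (hps u v w)
      rw [if_neg (ne_of_gt hspos)]
      have hlog : Real.log (q u w * r v w / (p u v w * s w))
          ≤ q u w * r v w / (p u v w * s w) - 1 :=
        Real.log_le_sub_one_of_pos (by positivity)
      have hexp : Real.log (q u w * r v w / (p u v w * s w))
          = Real.log (q u w) + Real.log (r v w) - Real.log (p u v w) - Real.log (s w) := by
        rw [Real.log_div (by positivity) (by positivity),
          Real.log_mul (ne_of_gt hqpos) (ne_of_gt hrpos),
          Real.log_mul (ne_of_gt hppos) (ne_of_gt hspos)]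
        ring
      have h2 := mul_le_mul_of_nonneg_left hlog (le_of_lt hppos)
      rw [hexp] at h2
      have heq : p u v w * (q u w * r v w / (p u v w * s w) - 1)
          = q u w * r v w / s w - p u v w := by
        field_simp
      rw [heq] at h2
      rw [Real.negMulLog]
      nlinarith [h2]
  -- sum the termwise bound
  have main : (∑ u, ∑ v, ∑ w, (Real.negMulLog (p u v w) + (-(p u v w * Real.log (s w)))
        - (-(p u v w * Real.log (q u w))) - (-(p u v w * Real.log (r v w)))))
      ≤ ∑ u, ∑ v, ∑ w, ((if s w = 0 then 0 else q u w * r v w / s w) - p u v w) := by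
    refine Finset.sum_le_sum fun u _ => Finset.sum_le_sum fun v _ => Finset.sum_le_sum fun w _ => key u v w
  have hsplit : (∑ u, ∑ v, ∑ w, (Real.negMulLog (p u v w) + (-(p u v w * Real.log (s w)))
        - (-(p u v w * Real.log (q u w))) - (-(p u v w * Real.log (r v w)))))
      = (∑ u, ∑ v, ∑ w, Real.negMulLog (p u v w))
        + (∑ u, ∑ v, ∑ w, (-(p u v w * Real.log (s w))))
        - (∑ u, ∑ v, ∑ w, (-(p u v w * Real.log (q u w))))
        - (∑ u, ∑ v, ∑ w, (-(p u v w * Real.log (r v w)))) := by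
    simp only [Finset.sum_sub_distrib, Finset.sum_add_distrib]
  have hrhs : (∑ u, ∑ v, ∑ w, ((if s w = 0 then 0 else q u w * r v w / s w) - p u v w)) = 0 := by
    have hsplit2 : (∑ u, ∑ v, ∑ w, ((if s w = 0 then 0 else q u w * r v w / s w) - p u v w))
        = (∑ u, ∑ v, ∑ w, (if s w = 0 then 0 else q u w * r v w / s w))
          - (∑ u, ∑ v, ∑ w, p u v w) := by
      simp only [Finset.sum_sub_distrib]
    rw [hsplit2, hsum_p]
    have swap : ∀ g : α₁ → α₂ → α₃ → ℝ,
        (∑ u, ∑ v, ∑ w, g u v w) = ∑ w, ∑ u, ∑ v, g u v w := by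
      intro g
      calc (∑ u, ∑ v, ∑ w, g u v w) = ∑ u, ∑ w, ∑ v, g u v w :=
            Finset.sum_congr rfl fun u _ => Finset.sum_comm
        _ = ∑ w, ∑ u, ∑ v, g u v w := Finset.sum_comm
    rw [swap]
    have hw : ∀ w, (∑ u, ∑ v, (if s w = 0 then 0 else q u w * r v w / s w)) = s w := by
      intro w
      by_cases hsw : s w = 0
      · simp [hsw]
      · simp only [if_neg hsw]
        have inner : ∀ u, (∑ v, q u w * r v w / s w) = q u w := by
          intro u
          rw [show (fun v => q u w * r v w / s w) = (fun v => q u w * (r v w / s w)) from by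
            funext v; ring]
          rw [← Finset.mul_sum, ← Finset.sum_div, hsr w, div_self hsw, mul_one]
        rw [show (∑ u, ∑ v, q u w * r v w / s w) = ∑ u, q u w from
          Finset.sum_congr rfl fun u _ => inner u]
        exact hsq w
    rw [Finset.sum_congr rfl fun w _ => hw w, hsum_s]
    norm_num
  rw [e_triple, e_q, e_r, e_s]
  linarith [main, hsplit.symm.trans_le (main.trans_eq hrhs)]


end Submod

lemma exists_perm_mem_iff {K : ℕ} (A B : Finset (Fin K)) (h : A.card = B.card) :
    ∃ π : Equiv.Perm (Fin K), ∀ i, π i ∈ B ↔ i ∈ A := by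
  have e1 : {i : Fin K // i ∈ A} ≃ {i : Fin K // i ∈ B} :=
    Fintype.equivOfCardEq (by simp [Fintype.card_coe, h])
  have e2 : {i : Fin K // ¬ i ∈ A} ≃ {i : Fin K // ¬ i ∈ B} :=
    Fintype.equivOfCardEq (by
      rw [Fintype.card_subtype_compl, Fintype.card_subtype_compl]
      simp [Fintype.card_coe, h])
  refine ⟨(Equiv.sumCompl (· ∈ A)).symm.trans ((e1.sumCongr e2).trans (Equiv.sumCompl (· ∈ B))), ?_⟩
  intro i
  by_cases hi : i ∈ A
  · simp only [Equiv.trans_apply, Equiv.sumCompl_symm_apply_of_pos hi,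
      Equiv.sumCongr_apply, Sum.map_inl, Equiv.sumCompl_apply_inl]
    exact iff_of_true (e1 ⟨i, hi⟩).2 hi
  · simp only [Equiv.trans_apply, Equiv.sumCompl_symm_apply_of_neg hi,
      Equiv.sumCongr_apply, Sum.map_inr, Equiv.sumCompl_apply_inr]
    exact iff_of_false (e2 ⟨i, hi⟩).2 hi

section Transfer

variable {Ω α γ : Type*} [Fintype Ω] [Fintype α] [Fintype γ] {K : ℕ}
  (μ : Ω → ℝ) (X : Fin K → Ω → α) (Z : Ω → γ)

lemma cE_card
    (hperm : ∀ (π : Equiv.Perm (Fin K)) (v : Fin K → α) (z : γ),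
      distOf μ (fun ω => ((fun i => X (π i) ω), Z ω)) (v, z)
        = distOf μ (fun ω => ((fun i => X i ω), Z ω)) (v, z))
    (A B : Finset (Fin K)) (h : A.card = B.card) :
    condEnt μ (restr X A) Z = condEnt μ (restr X B) Z := by
  obtain ⟨π, hπ⟩ := exists_perm_mem_iff A B h
  unfold condEnt
  have key : ent μ (fun ω => (restr X A ω, Z ω)) = ent μ (fun ω => (restr X B ω, Z ω)) := by
    -- step 1 : apply g to both distributions
    have hd : ∀ t : (Fin K → α) × γ,
        distOf μ (fun ω => ((fun i => X (π i) ω), Z ω)) t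
          = distOf μ (fun ω => ((fun i => X i ω), Z ω)) t := by
      rintro ⟨v, z⟩; exact hperm π v z
    set g : (Fin K → α) × γ → ({i : Fin K // i ∈ A} → α) × γ :=
      fun t => (fun i => t.1 i.1, t.2) with hg
    have hd2 : ∀ c, distOf μ (fun ω => g (((fun i => X (π i) ω), Z ω))) c
        = distOf μ (fun ω => g (((fun i => X i ω), Z ω))) c := by
      intro c
      rw [distOf_comp μ (fun ω => ((fun i => X (π i) ω), Z ω)) g c,
        distOf_comp μ (fun ω => ((fun i => X i ω), Z ω)) g c]
      exact Finset.sum_congr rfl fun t _ => by rw [hd t]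
    have e1 : ent μ (fun ω => g (((fun i => X (π i) ω), Z ω)))
        = ent μ (fun ω => g (((fun i => X i ω), Z ω))) := ent_congr μ _ _ hd2
    have eA : (fun ω => g (((fun i => X i ω), Z ω))) = fun ω => (restr X A ω, Z ω) := rfl
    -- step 2 : the permuted A-tuple is an injective image of the B-tuple
    set m : ({i : Fin K // i ∈ B} → α) × γ → ({i : Fin K // i ∈ A} → α) × γ :=
      fun t => (fun i => t.1 ⟨π i.1, (hπ i.1).2 i.2⟩, t.2) with hm
    have minj : Function.Injective m := by
      rintro ⟨w, z⟩ ⟨w', z'⟩ he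
      have h2 : z = z' := congrArg Prod.snd he
      have h1 : ∀ j : {i : Fin K // i ∈ B}, w j = w' j := by
        rintro ⟨j, hj⟩
        have hin : π.symm j ∈ A := by
          have : π (π.symm j) ∈ B := by rw [Equiv.apply_symm_apply]; exact hj
          exact (hπ _).1 this
        have := congrFun (congrArg Prod.fst he) ⟨π.symm j, hin⟩
        simpa [Equiv.apply_symm_apply, hm] using this
      exact Prod.ext (funext fun j => h1 j) h2
    have eB : (fun ω => m ((restr X B ω, Z ω))) = fun ω => g (((fun i => X (π i) ω), Z ω)) := rfl
    calc ent μ (fun ω => (restr X A ω, Z ω))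
        = ent μ (fun ω => g (((fun i => X i ω), Z ω))) := by rw [eA]
      _ = ent μ (fun ω => g (((fun i => X (π i) ω), Z ω))) := e1.symm
      _ = ent μ (fun ω => m ((restr X B ω, Z ω))) := by rw [eB]
      _ = ent μ (fun ω => (restr X B ω, Z ω)) := ent_comp_inj μ _ m minj
  rw [key]

lemma entJ (A : Finset (Fin K)) :
    ent μ (fun ω => (restr X A ω, Z ω))
      = ent μ (fun ω => ((fun i => if i ∈ A then some (X i ω) else none : Fin K → Option α), Z ω)) := by
  set e : ({i : Fin K // i ∈ A} → α) × γ → (Fin K → Option α) × γ :=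
    fun t => (fun i => if h : i ∈ A then some (t.1 ⟨i, h⟩) else none, t.2) with he
  have einj : Function.Injective e := by
    rintro ⟨v, z⟩ ⟨v', z'⟩ hq
    have h2 : z = z' := congrArg Prod.snd hq
    refine Prod.ext (funext fun i => ?_) h2
    have := congrFun (congrArg Prod.fst hq) i.1
    simpa [dif_pos i.2, he] using this
  have ecomp : (fun ω => e ((restr X A ω, Z ω)))
      = fun ω => ((fun i => if i ∈ A then some (X i ω) else none : Fin K → Option α), Z ω) := by
    funext ω
    refine Prod.ext (funext fun i => ?_) rfl
    by_cases h : i ∈ A <;> simp [he, restr, h]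
  rw [← ecomp, ent_comp_inj μ _ e einj]

lemma cE_empty : condEnt μ (restr X (∅ : Finset (Fin K))) Z = 0 := by
  unfold condEnt
  set e : γ → ({i : Fin K // i ∈ (∅ : Finset (Fin K))} → α) × γ :=
    fun z => (fun i => absurd i.2 (Finset.notMem_empty i.1), z) with he
  have einj : Function.Injective e := fun z z' h => congrArg Prod.snd h
  have ecomp : (fun ω => e (Z ω)) = fun ω => (restr X (∅ : Finset (Fin K)) ω, Z ω) := by
    funext ω
    exact Prod.ext (funext fun i => (Finset.notMem_empty i.1 i.2).elim) rfl
  rw [← ecomp, ent_comp_inj μ Z e einj, sub_self]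

lemma cE_submod (hμ0 : ∀ ω, 0 ≤ μ ω) (hμ1 : ∑ ω, μ ω = 1)
    {S : Finset (Fin K)} {x y : Fin K} (hx : x ∉ S) (hy : y ∉ S) (hxy : x ≠ y) :
    condEnt μ (restr X (insert x (insert y S))) Z + condEnt μ (restr X S) Z
      ≤ condEnt μ (restr X (insert x S)) Z + condEnt μ (restr X (insert y S)) Z := by
  have hsub := ent_submod μ hμ0 hμ1 (X x) (X y) (fun ω => (restr X S ω, Z ω))
  -- (x) pair
  set e2x : α × (({i : Fin K // i ∈ S} → α) × γ) → (Fin K → Option α) × γ :=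
    fun t => (fun i => if i = x then some t.1
      else if h : i ∈ S then some (t.2.1 ⟨i, h⟩) else none, t.2.2) with he2x
  have e2xinj : Function.Injective e2x := by
    rintro ⟨u, v, z⟩ ⟨u', v', z'⟩ hq
    have h2 : z = z' := congrArg Prod.snd hq
    have hu : u = u' := by
      have := congrFun (congrArg Prod.fst hq) x
      simpa [he2x] using this
    have hv : v = v' := by
      funext j
      have hne : (j : Fin K) ≠ x := fun hc => hx (hc ▸ j.2)
      have := congrFun (congrArg Prod.fst hq) j.1
      simpa [if_neg hne, dif_pos j.2, he2x] using this
    simp [hu, hv, h2]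
  have e2xcomp : (fun ω => e2x ((X x ω, (restr X S ω, Z ω))))
      = fun ω => ((fun i => if i ∈ insert x S then some (X i ω) else none : Fin K → Option α), Z ω) := by
    funext ω
    refine Prod.ext (funext fun i => ?_) rfl
    by_cases h1 : i = x
    · subst h1; simp [he2x]
    · by_cases h2 : i ∈ S <;> simp [he2x, h1, h2, restr]
  have E2x : ent μ (fun ω => (X x ω, (restr X S ω, Z ω)))
      = ent μ (fun ω => (restr X (insert x S) ω, Z ω)) := by
    rw [← ent_comp_inj μ (fun ω => (X x ω, (restr X S ω, Z ω))) e2x e2xinj,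
      entJ μ X Z (insert x S)]
    exact congrArg (ent μ) e2xcomp
  -- (y) pair
  set e2y : α × (({i : Fin K // i ∈ S} → α) × γ) → (Fin K → Option α) × γ :=
    fun t => (fun i => if i = y then some t.1
      else if h : i ∈ S then some (t.2.1 ⟨i, h⟩) else none, t.2.2) with he2y
  have e2yinj : Function.Injective e2y := by
    rintro ⟨u, v, z⟩ ⟨u', v', z'⟩ hq
    have h2 : z = z' := congrArg Prod.snd hq
    have hu : u = u' := by
      have := congrFun (congrArg Prod.fst hq) y
      simpa [he2y] using this
    have hv : v = v' := by
      funext j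
      have hne : (j : Fin K) ≠ y := fun hc => hy (hc ▸ j.2)
      have := congrFun (congrArg Prod.fst hq) j.1
      simpa [if_neg hne, dif_pos j.2, he2y] using this
    simp [hu, hv, h2]
  have e2ycomp : (fun ω => e2y ((X y ω, (restr X S ω, Z ω))))
      = fun ω => ((fun i => if i ∈ insert y S then some (X i ω) else none : Fin K → Option α), Z ω) := by
    funext ω
    refine Prod.ext (funext fun i => ?_) rfl
    by_cases h1 : i = y
    · subst h1; simp [he2y]
    · by_cases h2 : i ∈ S <;> simp [he2y, h1, h2, restr]
  have E2y : ent μ (fun ω => (X y ω, (restr X S ω, Z ω)))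
      = ent μ (fun ω => (restr X (insert y S) ω, Z ω)) := by
    rw [← ent_comp_inj μ (fun ω => (X y ω, (restr X S ω, Z ω))) e2y e2yinj,
      entJ μ X Z (insert y S)]
    exact congrArg (ent μ) e2ycomp
  -- triple
  set e3 : α × (α × (({i : Fin K // i ∈ S} → α) × γ)) → (Fin K → Option α) × γ :=
    fun t => (fun i => if i = x then some t.1 else if i = y then some t.2.1
      else if h : i ∈ S then some (t.2.2.1 ⟨i, h⟩) else none, t.2.2.2) with he3
  have e3inj : Function.Injective e3 := by
    rintro ⟨u, v, w, z⟩ ⟨u', v', w', z'⟩ hq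
    have h2 : z = z' := congrArg Prod.snd hq
    have hu : u = u' := by
      have := congrFun (congrArg Prod.fst hq) x
      simpa [he3] using this
    have hv : v = v' := by
      have := congrFun (congrArg Prod.fst hq) y
      simpa [if_neg (Ne.symm hxy), he3] using this
    have hw : w = w' := by
      funext j
      have hnex : (j : Fin K) ≠ x := fun hc => hx (hc ▸ j.2)
      have hney : (j : Fin K) ≠ y := fun hc => hy (hc ▸ j.2)
      have := congrFun (congrArg Prod.fst hq) j.1
      simpa [if_neg hnex, if_neg hney, dif_pos j.2, he3] using this
    simp [hu, hv, hw, h2]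
  have e3comp : (fun ω => e3 ((X x ω, (X y ω, (restr X S ω, Z ω)))))
      = fun ω => ((fun i => if i ∈ insert x (insert y S) then some (X i ω) else none :
          Fin K → Option α), Z ω) := by
    funext ω
    refine Prod.ext (funext fun i => ?_) rfl
    by_cases h1 : i = x
    · subst h1; simp [he3]
    · by_cases h2 : i = y
      · subst h2; simp [he3, h1]
      · by_cases h3 : i ∈ S <;> simp [he3, h1, h2, h3, restr]
  have E3 : ent μ (fun ω => (X x ω, (X y ω, (restr X S ω, Z ω))))
      = ent μ (fun ω => (restr X (insert x (insert y S)) ω, Z ω)) := by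
    rw [← ent_comp_inj μ (fun ω => (X x ω, (X y ω, (restr X S ω, Z ω)))) e3 e3inj,
      entJ μ X Z (insert x (insert y S))]
    exact congrArg (ent μ) e3comp
  unfold condEnt
  rw [← E3, ← E2x, ← E2y]
  linarith [hsub]

end Transfer

theorem stmt1 {Ω α γ : Type*} [Fintype Ω] [Fintype α] [Fintype γ] {K : ℕ}
    (μ : Ω → ℝ) (hμ0 : ∀ ω, 0 ≤ μ ω) (hμ1 : ∑ ω, μ ω = 1)
    (X : Fin K → Ω → α) (Z : Ω → γ)
    (hperm : ∀ (π : Equiv.Perm (Fin K)) (v : Fin K → α) (z : γ),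
      distOf μ (fun ω => ((fun i => X (π i) ω), Z ω)) (v, z)
        = distOf μ (fun ω => ((fun i => X i ω), Z ω)) (v, z))
    (A B : Finset (Fin K)) (hA : A.Nonempty) (hAB : A ⊆ B) :
    (1 / (B.card : ℝ)) * condEnt μ (restr X B) Z
      ≤ (1 / (A.card : ℝ)) * condEnt μ (restr X A) Z := by
  classical
  set seg : ℕ → Finset (Fin K) := fun k => univ.filter (fun i : Fin K => (i : ℕ) < k) with hseg
  have hseg_card : ∀ k, k ≤ K → (seg k).card = k := by
    intro k hk
    induction k with
    | zero => simp [hseg]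
    | succ n ih =>
      have hnK : n < K := hk
      have hstep : seg (n + 1) = insert ⟨n, hnK⟩ (seg n) := by
        ext i
        simp only [hseg, Finset.mem_filter, Finset.mem_univ, true_and, Finset.mem_insert,
          Fin.ext_iff]
        omega
      rw [hstep, Finset.card_insert_of_notMem (by simp [hseg]), ih (Nat.le_of_succ_le hk)]
  set f : ℕ → ℝ := fun k => condEnt μ (restr X (seg k)) Z with hfdef
  have hcardK : ∀ C : Finset (Fin K), C.card ≤ K := by
    intro C
    have := Finset.card_le_univ C
    simpa using this
  have hfc : ∀ C : Finset (Fin K), condEnt μ (restr X C) Z = f C.card := by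
    intro C
    exact cE_card μ X Z hperm C (seg C.card) (by rw [hseg_card _ (hcardK C)])
  have hf0 : f 0 = 0 := by
    have h0 : seg 0 = ∅ := by ext i; simp [hseg]
    rw [hfdef]; simp only; rw [h0]; exact cE_empty μ X Z
  -- concavity of increments
  have mono : ∀ k, k + 2 ≤ K → f (k + 2) - f (k + 1) ≤ f (k + 1) - f k := by
    intro k hk
    set x : Fin K := ⟨k + 1, by omega⟩ with hxd
    set y : Fin K := ⟨k, by omega⟩ with hyd
    have hx : x ∉ seg k := by simp [hseg, hxd]
    have hy : y ∉ seg k := by simp [hseg, hyd]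
    have hxy : x ≠ y := by simp [hxd, hyd, Fin.ext_iff]
    have h1 : insert y (seg k) = seg (k + 1) := by
      ext i
      simp only [hseg, Finset.mem_filter, Finset.mem_univ, true_and, Finset.mem_insert,
        hyd, Fin.ext_iff]
      omega
    have h2 : insert x (insert y (seg k)) = seg (k + 2) := by
      ext i
      simp only [hseg, Finset.mem_filter, Finset.mem_univ, true_and, Finset.mem_insert,
        hxd, hyd, Fin.ext_iff]
      omega
    have hsub := cE_submod μ X Z hμ0 hμ1 hx hy hxy
    rw [h2, h1] at hsub
    have hcx : (insert x (seg k)).card = k + 1 := by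
      rw [Finset.card_insert_of_notMem hx, hseg_card k (by omega)]
    have hix : condEnt μ (restr X (insert x (seg k))) Z = f (k + 1) := by
      rw [hfc (insert x (seg k)), hcx]
    rw [hix] at hsub
    have e1 : condEnt μ (restr X (seg (k + 2))) Z = f (k + 2) := rfl
    have e2 : condEnt μ (restr X (seg (k + 1))) Z = f (k + 1) := rfl
    have e3 : condEnt μ (restr X (seg k)) Z = f k := rfl
    rw [e1, e2, e3] at hsub
    linarith
  have anti : ∀ j k, j ≤ k → k + 1 ≤ K → f (k + 1) - f k ≤ f (j + 1) - f j := by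
    intro j k hjk hk
    induction k with
    | zero => have : j = 0 := Nat.le_zero.mp hjk; rw [this]
    | succ n ih =>
      rcases Nat.eq_or_lt_of_le hjk with he | hl
      · rw [he]
      · have hjn : j ≤ n := Nat.lt_succ_iff.mp hl
        have h1 : f (n + 2) - f (n + 1) ≤ f (n + 1) - f n := mono n (by omega)
        have h2 := ih hjn (by omega)
        calc f (n + 1 + 1) - f (n + 1) ≤ f (n + 1) - f n := h1
          _ ≤ f (j + 1) - f j := h2
  have step : ∀ m : ℕ, 1 ≤ m → m + 1 ≤ K →
      (1 / ((m : ℝ) + 1)) * f (m + 1) ≤ (1 / (m : ℝ)) * f m := by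
    intro m hm hmK
    have htel : ∑ j ∈ Finset.range m, (f (j + 1) - f j) = f m - f 0 :=
      Finset.sum_range_sub f m
    have hb : ∀ j ∈ Finset.range m, f (m + 1) - f m ≤ f (j + 1) - f j := by
      intro j hj
      exact anti j m (Nat.le_of_lt (Finset.mem_range.mp hj)) hmK
    have hsum : (m : ℝ) * (f (m + 1) - f m) ≤ f m := by
      have := Finset.sum_le_sum hb
      rw [htel, hf0, sub_zero, Finset.sum_const, Finset.card_range, nsmul_eq_mul] at this
      exact this
    have hm0 : (0 : ℝ) < m := by exact_mod_cast hm
    have hm1 : (0 : ℝ) < (m : ℝ) + 1 := by linarith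
    rw [one_div_mul_eq_div, one_div_mul_eq_div, div_le_div_iff₀ hm1 hm0]
    nlinarith [hsum]
  have chain : ∀ b a : ℕ, 1 ≤ a → a ≤ b → b ≤ K →
      (1 / (b : ℝ)) * f b ≤ (1 / (a : ℝ)) * f a := by
    intro b
    induction b with
    | zero => intro a ha hab _; omega
    | succ n ih =>
      intro a ha hab hbK
      rcases Nat.eq_or_lt_of_le hab with he | hl
      · rw [he]
      · have han : a ≤ n := Nat.lt_succ_iff.mp hl
        have h1 : (1 / ((n : ℝ) + 1)) * f (n + 1) ≤ (1 / (n : ℝ)) * f n :=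
          step n (le_trans ha han) hbK
        have h2 := ih a ha han (by omega)
        calc (1 / ((n + 1 : ℕ) : ℝ)) * f (n + 1)
            = (1 / ((n : ℝ) + 1)) * f (n + 1) := by push_cast; ring_nf
          _ ≤ (1 / (n : ℝ)) * f n := h1
          _ ≤ (1 / (a : ℝ)) * f a := h2
  have ha1 : 1 ≤ A.card := Finset.card_pos.mpr hA
  have hab : A.card ≤ B.card := Finset.card_le_card hAB
  rw [hfc A, hfc B]
  exact chain B.card A.card ha1 hab (hcardK B)
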